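/- Let P ⊆ S^{N−1} be a finite root system in ℝ^N (N ≥ 1) satisfying condition (EA). Then for every x ∈ ℝ^N with |x| ≥ σ1(P)⁻¹σ2(P) there exists a basis A ⊆ P of ℝ^N such that p·x ≥ 1 for all p ∈ A. -/

import Mathlib

open scoped RealInnerProductSpace
open Metric Set MeasureTheory

noncomputable section

abbrev E (N : ℕ) := EuclideanSpace ℝ (Fin N)

variable {N : ℕ}

/-- Reflection across the hyperplane `Π_p(s) = {x | x·p = s}`. -/
def reflect (p : E N) (s : ℝ) (x : E N) : E N := x - (2 * (⟪x, p⟫ - s)) • p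

/-- Reflection across the hyperplane through the origin orthogonal to `p`. -/
def reflect0 (p : E N) : E N → E N := reflect p 0

/-- A finite root system of unit vectors. -/
def IsRootSystem (P : Set (E N)) : Prop :=
  P.Finite ∧ (∀ p ∈ P, ‖p‖ = 1) ∧
  (∀ p ∈ P, {q | q ∈ P ∧ ∃ c : ℝ, q = c • p} = {p, -p}) ∧
  (∀ p ∈ P, reflect0 p '' P = P)

/-- Condition (EA): for every hyperplane through the origin (with normal `v ≠ 0`),
the part of `P` outside the hyperplane spans `ℝ^N`. -/
def CondEA (P : Set (E N)) : Prop :=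
  ∀ v : E N, v ≠ 0 → Submodule.span ℝ {p | p ∈ P ∧ ⟪p, v⟫ ≠ 0} = ⊤

/-- The reflection property (RP) with respect to `P` and `ρ`. -/
def ReflProp (P : Set (E N)) (ρ : ℝ) (Ω : Set (E N)) : Prop :=
  ∀ p ∈ P, ∀ s > ρ,
    reflect p s '' Ω ∩ {x | ⟪x, p⟫ < s} ⊆ Ω ∩ {x | ⟪x, p⟫ < s}

/-- `v` enumerates a basis of `ℝ^N` consisting of elements of `P`. -/
def BasisIn (P : Set (E N)) (v : Fin N → E N) : Prop :=
  (∀ i, v i ∈ P) ∧ LinearIndependent ℝ v ∧ Submodule.span ℝ (Set.range v) = ⊤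

/-- The open cone `Co_r(A)` generated by a basis. -/
def Cone (r : ℝ) (v : Fin N → E N) : Set (E N) :=
  {x | ∃ a : Fin N → ℝ, (∀ i, 0 < a i) ∧ (∑ i, a i) < r ∧ x = ∑ i, a i • v i}

/-- `σ₁(P)`. -/
def sigma1 (P : Set (E N)) : ℝ :=
  sInf {s | ∃ p₁ ∈ P, s = sSup {t | ∃ v : Fin N → E N, BasisIn P v ∧
    t = sInf (Set.range fun i => |⟪v i, p₁⟫|)}}

/-- `σ₂(P)`. -/
def sigma2 (P : Set (E N)) : ℝ :=
  sSup {t | ∃ x : E N, (∀ p ∈ P, |⟪p, x⟫| ≤ 1) ∧ t = ‖x‖}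

/-- `σ₃(P)`. -/
def sigma3 (P : Set (E N)) : ℝ :=
  sInf {s | ∃ v : Fin N → E N, BasisIn P v ∧
    s = sSup {r | 0 < r ∧ ball ((1 / (2 * (N : ℝ))) • ∑ i, v i) r ⊆ Cone 1 v}}

lemma neg_mem_of_rootSystem {P : Set (E N)} (hP : IsRootSystem P) {p : E N} (hp : p ∈ P) :
    -p ∈ P := by
  have h := hP.2.2.1 p hp
  have hm : -p ∈ ({p, -p} : Set (E N)) := by simp
  rw [← h] at hm
  exact hm.1

lemma reflect_mem {P : Set (E N)} (hP : IsRootSystem P) {p q : E N} (hp : p ∈ P) (hq : q ∈ P) :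
    q - (2 * ⟪q, p⟫) • p ∈ P := by
  have h := hP.2.2.2 p hp
  have hm : reflect0 p q ∈ reflect0 p '' P := ⟨q, hq, rfl⟩
  rw [h] at hm
  simpa [reflect0, reflect] using hm

lemma exists_basisIn_sub (P s : Set (E N)) (hsP : s ⊆ P) (hfin : P.Finite)
    (hspan : Submodule.span ℝ s = ⊤) :
    ∃ v : Fin N → E N, BasisIn P v ∧ ∀ i, v i ∈ s := by
  obtain ⟨b, hbs, hbspan, hbli⟩ := exists_linearIndependent ℝ s
  rw [hspan] at hbspan
  have hbfin : b.Finite := hfin.subset (hbs.trans hsP)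
  haveI : Fintype b := hbfin.fintype
  let B : Module.Basis b ℝ (E N) := Module.Basis.mk hbli (by rw [Subtype.range_coe, hbspan])
  have hcard : Fintype.card b = N := by
    have h1 := Module.finrank_eq_card_basis B
    rw [finrank_euclideanSpace_fin] at h1
    exact h1.symm
  let e : Fin N ≃ b := (Fintype.equivFinOfCardEq hcard).symm
  refine ⟨fun i => (e i : E N), ⟨fun i => hsP (hbs (e i).2), ?_, ?_⟩, fun i => hbs (e i).2⟩
  · exact hbli.comp e e.injective
  · have hr : Set.range (fun i => (e i : E N)) = b := by
      ext y
      constructor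
      · rintro ⟨i, rfl⟩; exact (e i).2
      · intro hy; exact ⟨e.symm ⟨y, hy⟩, by simp⟩
    rw [hr, hbspan]

lemma eq_zero_of_inner_span {s : Set (E N)} {z : E N}
    (hspan : Submodule.span ℝ s = ⊤) (h : ∀ p ∈ s, ⟪p, z⟫ = 0) : z = 0 := by
  have hz : z ∈ Submodule.span ℝ s := by rw [hspan]; trivial
  have key : ∀ y ∈ Submodule.span ℝ s, ⟪y, z⟫ = 0 := by
    intro y hy
    induction hy using Submodule.span_induction with
    | mem p hp => exact h p hp
    | zero => simp
    | add a b _ _ ha hb => rw [inner_add_left, ha, hb]; ring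
    | smul c a _ ha => rw [real_inner_smul_left, ha]; ring
  have := key z hz
  exact inner_self_eq_zero.mp this

lemma exists_vec_ne_zero (hN : 1 ≤ N) : ∃ v : E N, v ≠ 0 := by
  refine ⟨EuclideanSpace.single ⟨0, hN⟩ (1 : ℝ), ?_⟩
  intro h
  have h1 : ‖EuclideanSpace.single (⟨0, hN⟩ : Fin N) (1 : ℝ)‖ = 1 := by
    rw [EuclideanSpace.norm_single]; norm_num
  rw [h] at h1
  simp at h1

lemma span_P_top (hN : 1 ≤ N) {P : Set (E N)} (hEA : CondEA P) :
    Submodule.span ℝ P = ⊤ := by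
  obtain ⟨v, hv⟩ := exists_vec_ne_zero hN
  have h := hEA v hv
  refine top_unique ?_
  rw [← h]
  exact Submodule.span_mono fun p hp => hp.1

lemma P_nonempty (hN : 1 ≤ N) {P : Set (E N)} (hEA : CondEA P) : P.Nonempty := by
  rcases Set.eq_empty_or_nonempty P with h | h
  · exfalso
    have hs := span_P_top hN hEA
    rw [h] at hs
    simp only [Submodule.span_empty] at hs
    obtain ⟨v, hv⟩ := exists_vec_ne_zero hN
    have hb : v ∈ (⊥ : Submodule ℝ (E N)) := by rw [hs]; trivial
    exact hv ((Submodule.mem_bot ℝ).mp hb)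
  · exact h

lemma basisIn_flip {P : Set (E N)} (hP : IsRootSystem P) {v : Fin N → E N} (hv : BasisIn P v)
    (ε : Fin N → ℝ) (hε : ∀ i, ε i = 1 ∨ ε i = -1) : BasisIn P (fun i => ε i • v i) := by
  refine ⟨fun i => ?_, ?_, ?_⟩
  · show ε i • v i ∈ P
    rcases hε i with h | h
    · rw [h, one_smul]; exact hv.1 i
    · rw [h, neg_one_smul]; exact neg_mem_of_rootSystem hP (hv.1 i)
  · have h2 : LinearIndependent ℝ ((fun i => if ε i = 1 then (1 : ℝˣ) else (-1 : ℝˣ)) • v) :=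
      hv.2.1.units_smul _
    convert h2 using 1
    funext i
    show ε i • v i = _
    rw [Pi.smul_apply']
    rcases hε i with h | h
    · rw [if_pos h, h]
      simp [Units.smul_def]
    · have hne : ε i ≠ 1 := by rw [h]; norm_num
      rw [if_neg hne, h]
      simp [Units.smul_def]
  · refine top_unique ?_
    rw [← hv.2.2, Submodule.span_le]
    rintro _ ⟨i, rfl⟩
    have hvi : v i = ε i • (ε i • v i) := by
      rcases hε i with h | h <;> simp [h]
    rw [hvi]
    exact Submodule.smul_mem _ _ (Submodule.subset_span ⟨i, rfl⟩)

lemma basisIn_setFinite (P : Set (E N)) (hfin : P.Finite) :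
    {v : Fin N → E N | BasisIn P v}.Finite := by
  have hsub : {v : Fin N → E N | BasisIn P v} ⊆ Set.pi Set.univ (fun _ => P) := by
    intro v hv
    intro i _
    exact hv.1 i
  exact (Set.Finite.pi (fun _ => hfin)).subset hsub

lemma sigma1_spec (hN : 1 ≤ N) (P : Set (E N)) (hP : IsRootSystem P) (hEA : CondEA P) :
    0 < sigma1 P ∧ sigma1 P ≤ 1 ∧
      ∀ p₁ ∈ P, ∃ v : Fin N → E N, BasisIn P v ∧ ∀ i, sigma1 P ≤ |⟪v i, p₁⟫| := by
  haveI : Nonempty (Fin N) := ⟨⟨0, hN⟩⟩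
  set val : E N → ℝ := fun p₁ => sSup {t | ∃ v : Fin N → E N, BasisIn P v ∧
    t = sInf (Set.range fun i => |⟪v i, p₁⟫|)} with hval
  have hPne : P.Nonempty := P_nonempty hN hEA
  have hTeq : ∀ p₁ : E N, {t | ∃ v : Fin N → E N, BasisIn P v ∧
      t = sInf (Set.range fun i => |⟪v i, p₁⟫|)}
      = (fun v : Fin N → E N => sInf (Set.range fun i => |⟪v i, p₁⟫|)) ''
        {v | BasisIn P v} := by
    intro p₁
    ext t
    constructor
    · rintro ⟨v, hv, rfl⟩; exact ⟨v, hv, rfl⟩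
    · rintro ⟨v, hv, rfl⟩; exact ⟨v, hv, rfl⟩
  have hTfin : ∀ p₁ : E N, {t | ∃ v : Fin N → E N, BasisIn P v ∧
      t = sInf (Set.range fun i => |⟪v i, p₁⟫|)}.Finite := by
    intro p₁
    rw [hTeq p₁]
    exact (basisIn_setFinite P hP.1).image _
  obtain ⟨v₀, hv₀, -⟩ := exists_basisIn_sub P P subset_rfl hP.1 (span_P_top hN hEA)
  have hTne : ∀ p₁ : E N, {t | ∃ v : Fin N → E N, BasisIn P v ∧
      t = sInf (Set.range fun i => |⟪v i, p₁⟫|)}.Nonempty :=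
    fun p₁ => ⟨_, v₀, hv₀, rfl⟩
  -- outer set
  have hSeq : {s | ∃ p₁ ∈ P, s = val p₁} = val '' P := by
    ext s
    constructor
    · rintro ⟨p₁, hp₁, rfl⟩; exact ⟨p₁, hp₁, rfl⟩
    · rintro ⟨p₁, hp₁, rfl⟩; exact ⟨p₁, hp₁, rfl⟩
  have hSfin : {s | ∃ p₁ ∈ P, s = val p₁}.Finite := by rw [hSeq]; exact hP.1.image _
  have hSne : {s | ∃ p₁ ∈ P, s = val p₁}.Nonempty := ⟨_, hPne.choose, hPne.choose_spec, rfl⟩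
  have hs1 : sigma1 P = sInf {s | ∃ p₁ ∈ P, s = val p₁} := rfl
  have hmem : sigma1 P ∈ {s | ∃ p₁ ∈ P, s = val p₁} := by
    rw [hs1]; exact hSne.csInf_mem hSfin
  obtain ⟨pstar, hpstar, hstareq⟩ := hmem
  have hσle : ∀ p₁ ∈ P, sigma1 P ≤ val p₁ := by
    intro p₁ hp₁
    rw [hs1]
    exact csInf_le hSfin.bddBelow ⟨p₁, hp₁, rfl⟩
  -- attaining basis for each p₁
  have hattain : ∀ p₁ ∈ P, ∃ v : Fin N → E N, BasisIn P v ∧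
      ∀ i, val p₁ ≤ |⟪v i, p₁⟫| := by
    intro p₁ _
    have hm : val p₁ ∈ {t | ∃ v : Fin N → E N, BasisIn P v ∧
        t = sInf (Set.range fun i => |⟪v i, p₁⟫|)} := (hTne p₁).csSup_mem (hTfin p₁)
    obtain ⟨v, hv, heq⟩ := hm
    refine ⟨v, hv, fun i => ?_⟩
    rw [heq]
    exact csInf_le (Set.finite_range _).bddBelow ⟨i, rfl⟩
  -- positivity of val pstar
  have hvalpos : 0 < val pstar := by
    have hpne : pstar ≠ 0 := by
      intro h0
      have := hP.2.1 pstar hpstar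
      rw [h0] at this
      simp at this
    have hsp := hEA pstar hpne
    obtain ⟨v, hv, hvs⟩ := exists_basisIn_sub P {p | p ∈ P ∧ ⟪p, pstar⟫ ≠ 0}
      (fun p hp => hp.1) hP.1 hsp
    have hmem2 : sInf (Set.range fun i => |⟪v i, pstar⟫|) ∈ {t | ∃ v : Fin N → E N,
        BasisIn P v ∧ t = sInf (Set.range fun i => |⟪v i, pstar⟫|)} := ⟨v, hv, rfl⟩
    have hle2 : sInf (Set.range fun i => |⟪v i, pstar⟫|) ≤ val pstar :=
      le_csSup (hTfin pstar).bddAbove hmem2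
    have hpos : 0 < sInf (Set.range fun i => |⟪v i, pstar⟫|) := by
      have hGmem := (Set.range_nonempty (fun i => |⟪v i, pstar⟫|)).csInf_mem
        (Set.finite_range _)
      obtain ⟨j, hj⟩ := hGmem
      rw [← hj]
      exact abs_pos.mpr (hvs j).2
    linarith
  have hpos : 0 < sigma1 P := by rw [hstareq]; exact hvalpos
  have hle1 : sigma1 P ≤ 1 := by
    obtain ⟨v, hv, hvge⟩ := hattain pstar hpstar
    have h1 := hvge (Classical.arbitrary (Fin N))
    have h2 : |⟪v (Classical.arbitrary (Fin N)), pstar⟫| ≤ 1 := by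
      have := abs_real_inner_le_norm (v (Classical.arbitrary (Fin N))) pstar
      rw [hP.2.1 _ (hv.1 _), hP.2.1 _ hpstar] at this
      simpa using this
    rw [hstareq]
    calc val pstar ≤ |⟪v (Classical.arbitrary (Fin N)), pstar⟫| := h1
      _ ≤ 1 := h2
  refine ⟨hpos, hle1, fun p₁ hp₁ => ?_⟩
  obtain ⟨v, hv, hvge⟩ := hattain p₁ hp₁
  exact ⟨v, hv, fun i => le_trans (hσle p₁ hp₁) (hvge i)⟩

lemma sigma2_spec (hN : 1 ≤ N) (P : Set (E N)) (hP : IsRootSystem P) (hEA : CondEA P) :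
    1 ≤ sigma2 P ∧ ∀ z : E N, (∀ p ∈ P, |⟪p, z⟫| < 1) → ‖z‖ < sigma2 P := by
  have hPne : P.Nonempty := P_nonempty hN hEA
  obtain ⟨v₀, hv₀, -⟩ := exists_basisIn_sub P P subset_rfl hP.1 (span_P_top hN hEA)
  -- the "polytope norm" linear map
  set φ : E N →ₗ[ℝ] (Fin N → ℝ) :=
    LinearMap.pi (fun i => (innerSL ℝ (v₀ i)).toLinearMap) with hφ
  have hφapp : ∀ (z : E N) (i : Fin N), φ z i = ⟪v₀ i, z⟫ := fun z i => rfl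
  have hinj : Function.Injective φ := by
    rw [← LinearMap.ker_eq_bot, Submodule.eq_bot_iff]
    intro z hz
    have hz' : ∀ i, ⟪v₀ i, z⟫ = 0 := by
      intro i
      have := LinearMap.mem_ker.mp hz
      have h2 := congrFun this i
      exact h2
    refine eq_zero_of_inner_span hv₀.2.2 ?_
    rintro _ ⟨i, rfl⟩
    exact hz' i
  have hdim : Module.finrank ℝ (E N) = Module.finrank ℝ (Fin N → ℝ) := by
    rw [finrank_euclideanSpace_fin, Module.finrank_pi]
    simp
  set ψ := φ.linearEquivOfInjective hinj hdim with hψ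
  set g := LinearMap.toContinuousLinearMap (ψ.symm.toLinearMap) with hg
  have hrec : ∀ z : E N, g (φ z) = z := by
    intro z
    have : ψ z = φ z := LinearMap.linearEquivOfInjective_apply hinj hdim z
    calc g (φ z) = ψ.symm (φ z) := rfl
      _ = ψ.symm (ψ z) := by rw [this]
      _ = z := ψ.symm_apply_apply z
  have hbound : ∀ z : E N, (∀ p ∈ P, |⟪p, z⟫| ≤ 1) → ‖z‖ ≤ ‖g‖ := by
    intro z hz
    have h1 : ‖φ z‖ ≤ 1 := by
      rw [pi_norm_le_iff_of_nonneg zero_le_one]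
      intro i
      rw [hφapp, Real.norm_eq_abs]
      exact hz (v₀ i) (hv₀.1 i)
    calc ‖z‖ = ‖g (φ z)‖ := by rw [hrec]
      _ ≤ ‖g‖ * ‖φ z‖ := g.le_opNorm _
      _ ≤ ‖g‖ * 1 := by
          exact mul_le_mul_of_nonneg_left h1 (norm_nonneg g)
      _ = ‖g‖ := mul_one _
  have hbdd : BddAbove {t | ∃ x : E N, (∀ p ∈ P, |⟪p, x⟫| ≤ 1) ∧ t = ‖x‖} := by
    refine ⟨‖g‖, ?_⟩
    rintro t ⟨x, hx, rfl⟩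
    exact hbound x hx
  obtain ⟨p₀, hp₀⟩ := hPne
  have h1le : 1 ≤ sigma2 P := by
    have hmem : (1 : ℝ) ∈ {t | ∃ x : E N, (∀ p ∈ P, |⟪p, x⟫| ≤ 1) ∧ t = ‖x‖} := by
      refine ⟨p₀, fun p hp => ?_, (hP.2.1 p₀ hp₀).symm⟩
      have := abs_real_inner_le_norm p p₀
      rw [hP.2.1 p hp, hP.2.1 p₀ hp₀] at this
      simpa using this
    exact le_csSup hbdd hmem
  refine ⟨h1le, fun z hz => ?_⟩
  rcases eq_or_ne z 0 with rfl | hz0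
  · simpa using lt_of_lt_of_le one_pos h1le
  · set M := sSup ((fun p => |⟪p, z⟫|) '' P) with hM
    have himgfin : ((fun p => |⟪p, z⟫|) '' P).Finite := hP.1.image _
    have himgne : ((fun p => |⟪p, z⟫|) '' P).Nonempty := ⟨_, p₀, hp₀, rfl⟩
    have hMmem : M ∈ (fun p => |⟪p, z⟫|) '' P := himgne.csSup_mem himgfin
    obtain ⟨pM, hpM, hpMeq⟩ := hMmem
    have hMlt1 : M < 1 := by rw [← hpMeq]; exact hz (pM) hpM
    have hMub : ∀ p ∈ P, |⟪p, z⟫| ≤ M := fun p hp =>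
      le_csSup himgfin.bddAbove ⟨p, hp, rfl⟩
    have hMpos : 0 < M := by
      rcases lt_or_ge 0 M with h | h
      · exact h
      · exfalso
        apply hz0
        refine eq_zero_of_inner_span (span_P_top hN hEA) ?_
        intro p hp
        have := hMub p hp
        have habs : |⟪p, z⟫| ≤ 0 := le_trans this h
        exact abs_eq_zero.mp (le_antisymm habs (abs_nonneg _))
    have hmem2 : ‖M⁻¹ • z‖ ∈ {t | ∃ x : E N, (∀ p ∈ P, |⟪p, x⟫| ≤ 1) ∧ t = ‖x‖} := by
      refine ⟨M⁻¹ • z, fun p hp => ?_, rfl⟩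
      rw [real_inner_smul_right, abs_mul, abs_of_pos (inv_pos.mpr hMpos)]
      calc M⁻¹ * |⟪p, z⟫| ≤ M⁻¹ * M :=
        mul_le_mul_of_nonneg_left (hMub p hp) (le_of_lt (inv_pos.mpr hMpos))
        _ = 1 := inv_mul_cancel₀ (ne_of_gt hMpos)
    have hσ2ge : ‖M⁻¹ • z‖ ≤ sigma2 P := le_csSup hbdd hmem2
    have hnorm : ‖M⁻¹ • z‖ = M⁻¹ * ‖z‖ := by
      rw [norm_smul, Real.norm_eq_abs, abs_of_pos (inv_pos.mpr hMpos)]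
    have hzpos : 0 < ‖z‖ := norm_pos_iff.mpr hz0
    have hlt : ‖z‖ < M⁻¹ * ‖z‖ := by
      have hMinv : 1 < M⁻¹ := (one_lt_inv₀ hMpos).mpr hMlt1
      nlinarith
    rw [hnorm] at hσ2ge
    linarith


/-- for `|x| ≥ σ₁⁻¹σ₂` there is a basis `A ⊆ P` with `p·x ≥ 1` on `A`. -/
theorem exists_basis_inner_ge_one (N : ℕ) (hN : 1 ≤ N) (P : Set (E N))
    (hP : IsRootSystem P) (hEA : CondEA P) (x : E N)
    (hx : ‖x‖ ≥ (sigma1 P)⁻¹ * sigma2 P) :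
    ∃ v : Fin N → E N, BasisIn P v ∧ ∀ i, ⟪v i, x⟫ ≥ 1 := by
  obtain ⟨hσ1pos, hσ1le1, hσ1basis⟩ := sigma1_spec hN P hP hEA
  obtain ⟨hσ2ge1, hσ2strict⟩ := sigma2_spec hN P hP hEA
  have hPne : P.Nonempty := P_nonempty hN hEA
  set σ1 := sigma1 P with hσ1def
  set BigA : Set (E N) := {p | p ∈ P ∧ 1 ≤ |⟪p, x⟫|} with hBigAdef
  have hspanBig : Submodule.span ℝ BigA = ⊤ := by
    by_contra hne
    -- a maximizer of the inner product with x over P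
    have hexmax : ∃ p₁ ∈ P, ∀ p ∈ P, ⟪p, x⟫ ≤ ⟪p₁, x⟫ := by
      obtain ⟨p₁, hp₁, heq⟩ :=
        Set.Nonempty.csSup_mem (hPne.image (fun p => ⟪p, x⟫)) (hP.1.image _)
      refine ⟨p₁, hp₁, fun p hp => ?_⟩
      have h1 : ⟪p, x⟫ ≤ sSup ((fun p => ⟪p, x⟫) '' P) :=
        le_csSup (hP.1.image _).bddAbove ⟨p, hp, rfl⟩
      have h2 : ⟪p₁, x⟫ = sSup ((fun p => ⟪p, x⟫) '' P) := heq
      linarith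
    obtain ⟨p₁, hp₁P, hle⟩ := hexmax
    have hinvge1 : (1:ℝ) ≤ σ1⁻¹ := by
      have hcan : σ1 * σ1⁻¹ = 1 := mul_inv_cancel₀ (ne_of_gt hσ1pos)
      nlinarith
    have hMlt : ⟪p₁, x⟫ < σ1⁻¹ := by
      by_contra hMge
      push_neg at hMge
      have hM1 : (1:ℝ) ≤ ⟪p₁, x⟫ := le_trans hinvge1 hMge
      have hp₁Big : p₁ ∈ BigA := ⟨hp₁P, le_trans hM1 (le_abs_self _)⟩
      obtain ⟨v, hv, hvge⟩ := hσ1basis p₁ hp₁P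
      set ε : Fin N → ℝ := fun i => if ⟪v i, p₁⟫ < 0 then -1 else 1 with hε
      have hεpm : ∀ i, ε i = 1 ∨ ε i = -1 := by
        intro i
        show (if ⟪v i, p₁⟫ < 0 then (-1:ℝ) else 1) = 1 ∨
          (if ⟪v i, p₁⟫ < 0 then (-1:ℝ) else 1) = -1
        by_cases h : ⟪v i, p₁⟫ < 0
        · right; rw [if_pos h]
        · left; rw [if_neg h]
      set w : Fin N → E N := fun i => ε i • v i with hw
      have hwB : BasisIn P w := basisIn_flip hP hv ε hεpm
      have hc : ∀ i, σ1 ≤ ⟪w i, p₁⟫ := by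
        intro i
        show σ1 ≤ ⟪ε i • v i, p₁⟫
        rw [real_inner_smul_left]
        by_cases h : ⟪v i, p₁⟫ < 0
        · have hεi : ε i = -1 := by
            show (if ⟪v i, p₁⟫ < 0 then (-1:ℝ) else 1) = -1
            rw [if_pos h]
          rw [hεi]
          have h2 := hvge i
          rw [abs_of_neg h] at h2
          linarith
        · have hεi : ε i = 1 := by
            show (if ⟪v i, p₁⟫ < 0 then (-1:ℝ) else 1) = 1
            rw [if_neg h]
          rw [hεi]
          have h2 := hvge i
          rw [abs_of_nonneg (not_lt.mp h)] at h2
          linarith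
      have hexj : ∃ j, w j ∉ Submodule.span ℝ BigA := by
        by_contra hall
        push_neg at hall
        apply hne
        refine top_unique ?_
        rw [← hwB.2.2, Submodule.span_le]
        rintro _ ⟨i, rfl⟩
        exact hall i
      obtain ⟨j, hj⟩ := hexj
      have hwjP : w j ∈ P := hwB.1 j
      have hwjx : |⟪w j, x⟫| < 1 := by
        by_contra hge
        push_neg at hge
        exact hj (Submodule.subset_span ⟨hwjP, hge⟩)
      have hrP : w j - (2 * ⟪w j, p₁⟫) • p₁ ∈ P := reflect_mem hP hp₁P hwjP
      have hsm : ⟪(2 * ⟪w j, p₁⟫) • p₁, x⟫ = 2 * ⟪w j, p₁⟫ * ⟪p₁, x⟫ :=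
        real_inner_smul_left _ _ _
      have hrx : ⟪w j - (2 * ⟪w j, p₁⟫) • p₁, x⟫ = ⟪w j, x⟫ - 2 * ⟪w j, p₁⟫ * ⟪p₁, x⟫ := by
        rw [inner_sub_left, hsm]
      have hcM : 1 ≤ ⟪w j, p₁⟫ * ⟪p₁, x⟫ := by
        have h1 : σ1 ≤ ⟪w j, p₁⟫ := hc j
        have h2 : σ1⁻¹ ≤ ⟪p₁, x⟫ := hMge
        have h3 := mul_le_mul h1 h2 (by positivity) (le_trans (le_of_lt hσ1pos) h1)
        rw [mul_inv_cancel₀ (ne_of_gt hσ1pos)] at h3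
        exact h3
      have hrxlt : ⟪w j - (2 * ⟪w j, p₁⟫) • p₁, x⟫ < -1 := by
        have hlt1 : ⟪w j, x⟫ < 1 := lt_of_le_of_lt (le_abs_self _) hwjx
        rw [hrx]
        nlinarith
      have hrBig : w j - (2 * ⟪w j, p₁⟫) • p₁ ∈ BigA := by
        refine ⟨hrP, ?_⟩
        rw [abs_of_neg (by linarith)]
        linarith
      have hwjspan : w j ∈ Submodule.span ℝ BigA := by
        have heq : w j = (w j - (2 * ⟪w j, p₁⟫) • p₁) + (2 * ⟪w j, p₁⟫) • p₁ := by
          abel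
        rw [heq]
        exact Submodule.add_mem _ (Submodule.subset_span hrBig)
          (Submodule.smul_mem _ _ (Submodule.subset_span hp₁Big))
      exact hj hwjspan
    -- all inner products are < σ1⁻¹ in absolute value: contradiction with ‖x‖ large
    have hall : ∀ p ∈ P, |⟪p, σ1 • x⟫| < 1 := by
      intro p hp
      have h1 : ⟪p, x⟫ < σ1⁻¹ := lt_of_le_of_lt (hle p hp) hMlt
      have h2 : -⟪p, x⟫ < σ1⁻¹ := by
        have h3 := hle (-p) (neg_mem_of_rootSystem hP hp)
        rw [inner_neg_left] at h3
        linarith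
      rw [real_inner_smul_right, abs_mul, abs_of_pos hσ1pos]
      have habs : |⟪p, x⟫| < σ1⁻¹ := abs_lt.mpr ⟨by linarith, h1⟩
      calc σ1 * |⟪p, x⟫| < σ1 * σ1⁻¹ := mul_lt_mul_of_pos_left habs hσ1pos
        _ = 1 := mul_inv_cancel₀ (ne_of_gt hσ1pos)
    have hlt := hσ2strict (σ1 • x) hall
    have hge : sigma2 P ≤ ‖σ1 • x‖ := by
      rw [norm_smul, Real.norm_eq_abs, abs_of_pos hσ1pos]
      calc sigma2 P = σ1 * (σ1⁻¹ * sigma2 P) := by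
            rw [← mul_assoc, mul_inv_cancel₀ (ne_of_gt hσ1pos), one_mul]
        _ ≤ σ1 * ‖x‖ := mul_le_mul_of_nonneg_left hx (le_of_lt hσ1pos)
    linarith
  -- extract a basis among the roots with inner product ≥ 1
  have hspanS : Submodule.span ℝ {p | p ∈ P ∧ 1 ≤ ⟪p, x⟫} = ⊤ := by
    refine top_unique ?_
    rw [← hspanBig, Submodule.span_le]
    intro p hp
    rcases le_abs.mp hp.2 with h | h
    · exact Submodule.subset_span ⟨hp.1, h⟩
    · have hmem : -p ∈ {p | p ∈ P ∧ 1 ≤ ⟪p, x⟫} := by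
        refine ⟨neg_mem_of_rootSystem hP hp.1, ?_⟩
        rw [inner_neg_left]
        linarith
      have hpp : p = -(-p) := (neg_neg p).symm
      rw [hpp]
      exact Submodule.neg_mem _ (Submodule.subset_span hmem)
  obtain ⟨v, hv, hvS⟩ := exists_basisIn_sub P {p | p ∈ P ∧ 1 ≤ ⟪p, x⟫}
    (fun p hp => hp.1) hP.1 hspanS
  exact ⟨v, hv, fun i => (hvS i).2⟩
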